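/- Let V be a finite-dimensional real vector space. The space A(V) of algebraic curvature tensors on V equals the linear span of the set {γ(S) : S a symmetric bilinear form on V}, where γ(S)(w,x,y,z) := S(w,z)S(x,y) − S(w,y)S(x,z). -/

import Mathlib

open Finset

variable {V : Type} [AddCommGroup V] [Module ℝ V]

section defs

/-- The multilinear map `m ↦ S(m0,m3) T(m1,m2)`. -/
def g1 (S T : V →ₗ[ℝ] V →ₗ[ℝ] ℝ) : MultilinearMap ℝ (fun _ : Fin 4 => V) ℝ where
  toFun m := S (m 0) (m 3) * T (m 1) (m 2)
  map_update_add' := by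
    intro dec m i x y
    have h : dec = instDecidableEqFin 4 := Subsingleton.elim _ _
    subst h
    fin_cases i <;>
      simp [Function.update_apply, map_add, LinearMap.add_apply] <;> ring
  map_update_smul' := by
    intro dec m i c x
    have h : dec = instDecidableEqFin 4 := Subsingleton.elim _ _
    subst h
    fin_cases i <;>
      simp [Function.update_apply, map_smul, LinearMap.smul_apply, smul_eq_mul] <;> ring

/-- The multilinear map `m ↦ S(m0,m2) T(m1,m3)`. -/
def g2 (S T : V →ₗ[ℝ] V →ₗ[ℝ] ℝ) : MultilinearMap ℝ (fun _ : Fin 4 => V) ℝ where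
  toFun m := S (m 0) (m 2) * T (m 1) (m 3)
  map_update_add' := by
    intro dec m i x y
    have h : dec = instDecidableEqFin 4 := Subsingleton.elim _ _
    subst h
    fin_cases i <;>
      simp [Function.update_apply, map_add, LinearMap.add_apply] <;> ring
  map_update_smul' := by
    intro dec m i c x
    have h : dec = instDecidableEqFin 4 := Subsingleton.elim _ _
    subst h
    fin_cases i <;>
      simp [Function.update_apply, map_smul, LinearMap.smul_apply, smul_eq_mul] <;> ring

def gammaT (S : V →ₗ[ℝ] V →ₗ[ℝ] ℝ) : MultilinearMap ℝ (fun _ : Fin 4 => V) ℝ :=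
  g1 S S - g2 S S

@[simp] lemma gammaT_apply (S : V →ₗ[ℝ] V →ₗ[ℝ] ℝ) (m : Fin 4 → V) :
    gammaT S m = S (m 0) (m 3) * S (m 1) (m 2) - S (m 0) (m 2) * S (m 1) (m 3) := rfl

/-- the coordinate functional -/
noncomputable def cL {n : ℕ} (b : Module.Basis (Fin n) ℝ V) (u : V) : V →ₗ[ℝ] ℝ :=
  ∑ i : Fin n, b.repr u i • b.coord i

lemma cL_basis {n : ℕ} (b : Module.Basis (Fin n) ℝ V) (u : V) (j : Fin n) :
    cL b u (b j) = b.repr u j := by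
  simp [cL, LinearMap.sum_apply, Module.Basis.coord_apply, Finsupp.single_apply]

/-- rank-one symmetric bilinear form from coordinates of `u` -/
noncomputable def SS {n : ℕ} (b : Module.Basis (Fin n) ℝ V) (u : V) : V →ₗ[ℝ] V →ₗ[ℝ] ℝ :=
  (LinearMap.mul ℝ ℝ).compl₁₂ (cL b u) (cL b u)

lemma SS_apply {n : ℕ} (b : Module.Basis (Fin n) ℝ V) (u x y : V) :
    SS b u x y = cL b u x * cL b u y := rfl

lemma SS_symm {n : ℕ} (b : Module.Basis (Fin n) ℝ V) (u x y : V) : SS b u x y = SS b u y x :=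
  mul_comm _ _

/-- pairing bilinear form on multilinear maps determined by a basis -/
noncomputable def Bform {n : ℕ} (b : Module.Basis (Fin n) ℝ V) :
    MultilinearMap ℝ (fun _ : Fin 4 => V) ℝ →ₗ[ℝ]
      MultilinearMap ℝ (fun _ : Fin 4 => V) ℝ →ₗ[ℝ] ℝ :=
  LinearMap.mk₂ ℝ
    (fun s t => ∑ f : Fin 4 → Fin n, s (fun i => b (f i)) * t (fun i => b (f i)))
    (by intro s s' t
        simp [MultilinearMap.add_apply, add_mul, Finset.sum_add_distrib])
    (by intro c s t
        simp [MultilinearMap.smul_apply, smul_eq_mul, Finset.mul_sum, mul_assoc])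
    (by intro s t t'
        simp [MultilinearMap.add_apply, mul_add, Finset.sum_add_distrib])
    (by intro c s t
        simp only [MultilinearMap.smul_apply, smul_eq_mul, Finset.mul_sum]
        exact Finset.sum_congr rfl fun f _ => by ring)

lemma Bform_apply {n : ℕ} (b : Module.Basis (Fin n) ℝ V)
    (s t : MultilinearMap ℝ (fun _ : Fin 4 => V) ℝ) :
    Bform b s t = ∑ f : Fin 4 → Fin n, s (fun i => b (f i)) * t (fun i => b (f i)) := rfl

lemma Bform_symm {n : ℕ} (b : Module.Basis (Fin n) ℝ V)
    (s t : MultilinearMap ℝ (fun _ : Fin 4 => V) ℝ) : Bform b s t = Bform b t s := by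
  simp [Bform_apply, mul_comm]

lemma Bform_refl {n : ℕ} (b : Module.Basis (Fin n) ℝ V) : (Bform b).IsRefl := by
  intro s t h
  rwa [Bform_symm] at h

lemma Bform_restrict_nondeg {n : ℕ} (b : Module.Basis (Fin n) ℝ V)
    (p : Submodule ℝ (MultilinearMap ℝ (fun _ : Fin 4 => V) ℝ)) :
    (LinearMap.BilinForm.restrict (Bform b) p).Nondegenerate := by
  refine (fun hL : (LinearMap.BilinForm.restrict (Bform b) p).SeparatingLeft =>
    ⟨hL, fun y hy => hL y fun x => ?_⟩) ?_
  case refine_2 => exact (Bform_refl b) _ _ (hy x)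
  rintro ⟨x, hx⟩ h
  have h0 : Bform b x x = 0 := h ⟨x, hx⟩
  rw [Bform_apply] at h0
  have hz : ∀ f : Fin 4 → Fin n, x (fun i => b (f i)) = 0 := by
    intro f
    have := (Finset.sum_eq_zero_iff_of_nonneg
      (fun f _ => mul_self_nonneg (x fun i => b (f i)))).mp h0 f (mem_univ f)
    exact mul_self_eq_zero.mp this
  have : x = 0 := by
    apply Module.Basis.ext_multilinear (fun _ => b)
    intro v
    simpa using hz v
  simp [this]

/-- expansion of a multilinear map in a basis -/
lemma expand {n : ℕ} (b : Module.Basis (Fin n) ℝ V)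
    (t : MultilinearMap ℝ (fun _ : Fin 4 => V) ℝ) (m : Fin 4 → V) :
    t m = ∑ f : Fin 4 → Fin n, (∏ i, b.repr (m i) (f i)) * t (fun i => b (f i)) := by
  conv_lhs => rw [show m = fun i => ∑ j : Fin n, b.repr (m i) j • b j from
    funext fun i => (b.sum_repr (m i)).symm]
  rw [MultilinearMap.map_sum]
  refine Finset.sum_congr rfl fun f _ => ?_
  rw [MultilinearMap.map_smul_univ]
  simp [smul_eq_mul]

end defs

section slots

lemma upd0 (a b c d x : V) : Function.update ![a, b, c, d] 0 x = ![x, b, c, d] := by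
  funext i; fin_cases i <;> simp
lemma upd1 (a b c d x : V) : Function.update ![a, b, c, d] 1 x = ![a, x, c, d] := by
  funext i; fin_cases i <;> simp
lemma upd2 (a b c d x : V) : Function.update ![a, b, c, d] 2 x = ![a, b, x, d] := by
  funext i; fin_cases i <;> simp
lemma upd3 (a b c d x : V) : Function.update ![a, b, c, d] 3 x = ![a, b, c, x] := by
  funext i; fin_cases i <;> simp

variable (t : MultilinearMap ℝ (fun _ : Fin 4 => V) ℝ)

lemma addSlot0 (a a' b c d : V) :
    t ![a + a', b, c, d] = t ![a, b, c, d] + t ![a', b, c, d] := by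
  have h := t.map_update_add ![a, b, c, d] 0 a a'
  rwa [upd0, upd0, upd0] at h

lemma addSlot1 (a b b' c d : V) :
    t ![a, b + b', c, d] = t ![a, b, c, d] + t ![a, b', c, d] := by
  have h := t.map_update_add ![a, b, c, d] 1 b b'
  rwa [upd1, upd1, upd1] at h

lemma addSlot2 (a b c c' d : V) :
    t ![a, b, c + c', d] = t ![a, b, c, d] + t ![a, b, c', d] := by
  have h := t.map_update_add ![a, b, c, d] 2 c c'
  rwa [upd2, upd2, upd2] at h

lemma addSlot3 (a b c d d' : V) :
    t ![a, b, c, d + d'] = t ![a, b, c, d] + t ![a, b, c, d'] := by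
  have h := t.map_update_add ![a, b, c, d] 3 d d'
  rwa [upd3, upd3, upd3] at h

end slots

section vanish

variable {t : MultilinearMap ℝ (fun _ : Fin 4 => V) ℝ}

/-- An algebraic curvature tensor whose "sectional" values vanish is zero. -/
lemma act_vanish
    (h1 : ∀ w x y z : V, t ![w, x, y, z] = - t ![w, x, z, y])
    (h2 : ∀ w x y z : V, t ![w, x, y, z] = t ![y, z, w, x])
    (h3 : ∀ w x y z : V, t ![w, x, y, z] + t ![w, y, z, x] + t ![w, z, x, y] = 0)
    (hv : ∀ u v : V, t ![u, v, v, u] = 0) : t = 0 := by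
  -- antisymmetry in the first two slots
  have haux : ∀ w x y z : V, t ![w, x, y, z] = - t ![x, w, y, z] := by
    intro w x y z
    rw [h2 w x y z, h1 y z w x, h2 y z x w]
  -- step a : t(u,v,v,w) = 0
  have ha : ∀ u v w : V, t ![u, v, v, w] = 0 := by
    intro u v w
    have h := hv (u + w) v
    rw [addSlot0, addSlot3, addSlot3] at h
    rw [hv u v, hv w v] at h
    have hswap : t ![w, v, v, u] = t ![u, v, v, w] := by
      rw [h2 w v v u, h1 v u w v, haux v u v w]; ring
    rw [hswap] at h
    linarith
  -- step b : antisymmetry in middle slots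
  have hb : ∀ u v x w : V, t ![u, v, x, w] = - t ![u, x, v, w] := by
    intro u v x w
    have h := ha u (v + x) w
    rw [addSlot1, addSlot2, addSlot2] at h
    rw [ha u v w, ha u x w] at h
    linarith
  -- step c : everything vanishes on quadruples
  have hq : ∀ u v x w : V, t ![u, v, x, w] = 0 := by
    intro u v x w
    have h := h3 u v x w
    have e1 : t ![u, x, w, v] = t ![u, v, x, w] := by
      rw [hb u x w v, h1 u w x v, hb u w v x, h1 u v w x]; ring
    have e2 : t ![u, w, v, x] = t ![u, v, x, w] := by
      rw [hb u w v x, h1 u v w x]; ring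
    rw [e1, e2] at h
    linarith
  ext m
  have hm : m = ![m 0, m 1, m 2, m 3] := by
    funext i; fin_cases i <;> rfl
  rw [hm]
  simpa using hq (m 0) (m 1) (m 2) (m 3)

end vanish

section key

variable {n : ℕ}

noncomputable def lam (b : Module.Basis (Fin n) ℝ V) (u v : V) :
    MultilinearMap ℝ (fun _ : Fin 4 => V) ℝ :=
  gammaT (SS b u + SS b v) - gammaT (SS b u) - gammaT (SS b v)

lemma lam_eval (b : Module.Basis (Fin n) ℝ V) (u v : V) (f : Fin 4 → Fin n) :
    lam b u v (fun i => b (f i)) =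
      b.repr u (f 0) * b.repr v (f 1) * b.repr v (f 2) * b.repr u (f 3)
      + b.repr v (f 0) * b.repr u (f 1) * b.repr u (f 2) * b.repr v (f 3)
      - b.repr u (f 0) * b.repr v (f 1) * b.repr u (f 2) * b.repr v (f 3)
      - b.repr v (f 0) * b.repr u (f 1) * b.repr v (f 2) * b.repr u (f 3) := by
  simp only [lam, MultilinearMap.sub_apply, gammaT_apply, LinearMap.add_apply,
    SS_apply, cL_basis]
  ring

lemma sum_pattern (b : Module.Basis (Fin n) ℝ V) (t : MultilinearMap ℝ (fun _ : Fin 4 => V) ℝ)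
    (m : Fin 4 → V) :
    ∑ f : Fin 4 → Fin n,
      (b.repr (m 0) (f 0) * b.repr (m 1) (f 1) * b.repr (m 2) (f 2) * b.repr (m 3) (f 3))
        * t (fun i => b (f i)) = t m := by
  rw [expand b t m]
  exact Finset.sum_congr rfl fun f _ => by rw [Fin.prod_univ_four]

lemma Bform_lam (b : Module.Basis (Fin n) ℝ V) (u v : V)
    (t : MultilinearMap ℝ (fun _ : Fin 4 => V) ℝ) :
    Bform b (lam b u v) t =
      t ![u, v, v, u] + t ![v, u, u, v] - t ![u, v, u, v] - t ![v, u, v, u] := by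
  rw [Bform_apply]
  have k1 := sum_pattern b t ![u, v, v, u]
  have k2 := sum_pattern b t ![v, u, u, v]
  have k3 := sum_pattern b t ![u, v, u, v]
  have k4 := sum_pattern b t ![v, u, v, u]
  simp only [Matrix.cons_val_zero, Matrix.cons_val_one, Matrix.head_cons,
    Matrix.cons_val_two, Matrix.cons_val_three, Matrix.tail_cons] at k1 k2 k3 k4
  rw [← k1, ← k2, ← k3, ← k4]
  rw [← Finset.sum_add_distrib, ← Finset.sum_sub_distrib, ← Finset.sum_sub_distrib]
  exact Finset.sum_congr rfl fun f _ => by rw [lam_eval]; ring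

lemma lam_mem (b : Module.Basis (Fin n) ℝ V) (u v : V) :
    lam b u v ∈ Submodule.span ℝ {T : MultilinearMap ℝ (fun _ : Fin 4 => V) ℝ |
      ∃ S : V →ₗ[ℝ] V →ₗ[ℝ] ℝ, (∀ x y : V, S x y = S y x) ∧
        ∀ w x y z : V, T ![w, x, y, z] = S w z * S x y - S w y * S x z} := by
  have hmem : ∀ S : V →ₗ[ℝ] V →ₗ[ℝ] ℝ, (∀ x y : V, S x y = S y x) →
      gammaT S ∈ Submodule.span ℝ {T : MultilinearMap ℝ (fun _ : Fin 4 => V) ℝ |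
        ∃ S : V →ₗ[ℝ] V →ₗ[ℝ] ℝ, (∀ x y : V, S x y = S y x) ∧
          ∀ w x y z : V, T ![w, x, y, z] = S w z * S x y - S w y * S x z} := by
    intro S hS
    exact Submodule.subset_span ⟨S, hS, fun w x y z => by simp [gammaT_apply]⟩
  refine Submodule.sub_mem _ (Submodule.sub_mem _ (hmem _ ?_) (hmem _ (SS_symm b u)))
    (hmem _ (SS_symm b v))
  intro x y
  simp only [LinearMap.add_apply, SS_symm b u x y, SS_symm b v x y]

end key

/-- For a finite-dimensional real vector space `V`, the space `A(V)` of
algebraic curvature tensors equals the linear span of `{γ(S) : S symmetric bilinear}`,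
where `γ(S)(w,x,y,z) = S(w,z)S(x,y) − S(w,y)S(x,z)`. -/
theorem stmt_0 (V : Type) [AddCommGroup V] [Module ℝ V] [FiniteDimensional ℝ V] :
    {R : MultilinearMap ℝ (fun _ : Fin 4 => V) ℝ |
      (∀ w x y z : V, R ![w, x, y, z] = - R ![w, x, z, y]) ∧
      (∀ w x y z : V, R ![w, x, y, z] = R ![y, z, w, x]) ∧
      (∀ w x y z : V, R ![w, x, y, z] + R ![w, y, z, x] + R ![w, z, x, y] = 0)} =
    ↑(Submodule.span ℝ {T : MultilinearMap ℝ (fun _ : Fin 4 => V) ℝ |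
      ∃ S : V →ₗ[ℝ] V →ₗ[ℝ] ℝ, (∀ x y : V, S x y = S y x) ∧
        ∀ w x y z : V, T ![w, x, y, z] = S w z * S x y - S w y * S x z}) := by
    classical
  -- the ACT conditions form a submodule
  let A : Submodule ℝ (MultilinearMap ℝ (fun _ : Fin 4 => V) ℝ) :=
  { carrier := {R : MultilinearMap ℝ (fun _ : Fin 4 => V) ℝ |
      (∀ w x y z : V, R ![w, x, y, z] = - R ![w, x, z, y]) ∧
      (∀ w x y z : V, R ![w, x, y, z] = R ![y, z, w, x]) ∧
      (∀ w x y z : V, R ![w, x, y, z] + R ![w, y, z, x] + R ![w, z, x, y] = 0)}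
    add_mem' := by
      rintro a b ⟨a1, a2, a3⟩ ⟨b1, b2, b3⟩
      refine ⟨fun w x y z => ?_, fun w x y z => ?_, fun w x y z => ?_⟩ <;>
        simp only [MultilinearMap.add_apply]
      · rw [a1 w x y z, b1 w x y z]; ring
      · rw [a2 w x y z, b2 w x y z]
      · have := a3 w x y z; have := b3 w x y z; linarith
    zero_mem' := by
      refine ⟨fun w x y z => ?_, fun w x y z => ?_, fun w x y z => ?_⟩ <;>
        simp [MultilinearMap.zero_apply]
    smul_mem' := by
      rintro c a ⟨a1, a2, a3⟩
      refine ⟨fun w x y z => ?_, fun w x y z => ?_, fun w x y z => ?_⟩ <;>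
        simp only [MultilinearMap.smul_apply, smul_eq_mul]
      · rw [a1 w x y z]; ring
      · rw [a2 w x y z]
      · have h := a3 w x y z; linear_combination c * h }
  set gen : Set (MultilinearMap ℝ (fun _ : Fin 4 => V) ℝ) :=
    {T : MultilinearMap ℝ (fun _ : Fin 4 => V) ℝ |
      ∃ S : V →ₗ[ℝ] V →ₗ[ℝ] ℝ, (∀ x y : V, S x y = S y x) ∧
        ∀ w x y z : V, T ![w, x, y, z] = S w z * S x y - S w y * S x z} with hgen
  set p := Submodule.span ℝ gen with hp
  -- generators satisfy the curvature identities
  have gen_sub : gen ⊆ (A : Set (MultilinearMap ℝ (fun _ : Fin 4 => V) ℝ)) := by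
    rintro T ⟨S, hS, hT⟩
    refine ⟨fun w x y z => ?_, fun w x y z => ?_, fun w x y z => ?_⟩
    · rw [hT w x y z, hT w x z y]; ring
    · rw [hT w x y z, hT y z w x, hS y x, hS z w, hS y w, hS z x]; ring
    · rw [hT w x y z, hT w y z x, hT w z x y, hS y x, hS z x, hS z y]; ring
  have hple : p ≤ A := Submodule.span_le.mpr gen_sub
  apply Set.eq_of_subset_of_subset
  · -- A ⊆ span
    intro R hR
    let b := Module.finBasis ℝ V
    have hcompl : IsCompl p (LinearMap.BilinForm.orthogonal (Bform b) p) :=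
      LinearMap.BilinForm.isCompl_orthogonal_of_restrict_nondegenerate
        (Bform_refl b) (Bform_restrict_nondeg b p)
    have hmem : R ∈ p ⊔ LinearMap.BilinForm.orthogonal (Bform b) p := by
      rw [hcompl.sup_eq_top]; trivial
    obtain ⟨s, hs, tt, htt, hsum⟩ := Submodule.mem_sup.mp hmem
    have htA : tt ∈ A := by
      have he : tt = R - s := by rw [← hsum]; abel
      rw [he]
      exact A.sub_mem hR (hple hs)
    obtain ⟨t1, t2, t3⟩ := htA
    have hv : ∀ u v : V, tt ![u, v, v, u] = 0 := by
      intro u v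
      have h : Bform b (lam b u v) tt = 0 :=
        (LinearMap.BilinForm.mem_orthogonal_iff.mp htt) (lam b u v) (lam_mem b u v)
      rw [Bform_lam] at h
      have e1 : tt ![v, u, u, v] = tt ![u, v, v, u] := (t2 v u u v)
      have e2 : tt ![u, v, v, u] = - tt ![u, v, u, v] := t1 u v v u
      have e3 : tt ![v, u, u, v] = - tt ![v, u, v, u] := t1 v u u v
      linarith
    have htz : tt = 0 := act_vanish t1 t2 t3 hv
    rw [htz, add_zero] at hsum
    rw [← hsum]
    exact hs
  · exact fun T hT => hple hT
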